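/- arXiv:1404.7491 — 2 statements merged into one kernel-verified Lean document; each statement's English description precedes it below -/
import Mathlib

section
/- For all nonnegative integers m and x, the Meixner polynomial satisfies the three-term recurrence (c−1)·x·M_m(x; α, c) = c·(m+α)·M_{m+1}(x; α, c) − (m + (m+α)·c)·M_m(x; α, c) + m·M_{m−1}(x; α, c), where the last term is 0 when m = 0. -/
noncomputable def poch (α : ℝ) (k : ℕ) : ℝ := ∏ i ∈ Finset.range k, (α + i)

noncomputable def Meixner (m x : ℕ) (α c : ℝ) : ℝ :=
  ∑ k ∈ Finset.range (m + 1),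
    ((k.factorial : ℝ) / poch α k) * (m.choose k) * (x.choose k) * (1 - 1 / c) ^ k

noncomputable def bb (α c : ℝ) (x k : ℕ) : ℝ :=
  ((k.factorial : ℝ) / poch α k) * (x.choose k) * (1 - 1 / c) ^ k

lemma poch_succ (α : ℝ) (k : ℕ) : poch α (k + 1) = poch α k * (α + k) :=
  Finset.prod_range_succ _ _

lemma poch_ne (α : ℝ) (hα : ∀ k : ℕ, α ≠ -(k : ℝ)) (k : ℕ) : poch α k ≠ 0 := by
  unfold poch
  rw [Finset.prod_ne_zero_iff]
  intro i _ h
  exact hα i (by linarith)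

lemma choose_real (n k : ℕ) :
    ((k : ℝ) + 1) * (n.choose (k + 1)) = ((n : ℝ) - k) * n.choose k := by
  have h1 := Nat.add_one_mul_choose_eq n k
  rw [Nat.choose_succ_succ] at h1
  have h2 : ((n : ℝ) + 1) * n.choose k = ((n.choose k : ℝ) + n.choose (k + 1)) * ((k : ℝ) + 1) := by
    exact_mod_cast h1
  linear_combination -h2

lemma choose_mul_real (n k : ℕ) :
    ((n : ℝ) + 1 - k) * ((n + 1).choose k) = ((n : ℝ) + 1) * (n.choose k) := by
  rcases le_or_gt k (n + 1) with h | h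
  · have h1 := Nat.choose_mul_succ_eq n k
    have h2 : ((n.choose k : ℝ)) * ((n : ℝ) + 1) = ((n + 1).choose k : ℝ) * (((n : ℝ) + 1) - k) := by
      have := congrArg (Nat.cast : ℕ → ℝ) h1
      push_cast [Nat.cast_sub h] at this
      linarith [this]
    linarith [h2]
  · rw [Nat.choose_eq_zero_of_lt h, Nat.choose_eq_zero_of_lt (by omega)]
    simp

lemma meixner_eq (m x : ℕ) (α c : ℝ) :
    Meixner m x α c = ∑ k ∈ Finset.range (m + 1), (m.choose k : ℝ) * bb α c x k := by
  unfold Meixner bb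
  exact Finset.sum_congr rfl fun k _ => by ring

lemma bb_rec (α : ℝ) (hα : ∀ k : ℕ, α ≠ -(k : ℝ)) (c : ℝ) (hc : c ≠ 0) (x k : ℕ) :
    (c - 1) * x * bb α c x k = c * (α + k) * bb α c x (k + 1) + (c - 1) * k * bb α c x k := by
  have hx : (x : ℝ) * (x.choose k) = k * (x.choose k) + ((k : ℝ) + 1) * (x.choose (k + 1)) := by
    have := choose_real x k; linarith
  have hp := poch_ne α hα k
  have hαk : α + (k : ℝ) ≠ 0 := fun h => hα k (by linarith)
  have hstep : c * (α + k) * bb α c x (k + 1) =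
      (c - 1) * ((k : ℝ) + 1) * ((k.factorial : ℝ) / poch α k) * (x.choose (k + 1))
        * (1 - 1 / c) ^ k := by
    unfold bb
    rw [poch_succ, Nat.factorial_succ, pow_succ]
    push_cast
    field_simp
  rw [hstep]
  unfold bb
  linear_combination ((c - 1) * ((k.factorial : ℝ) / poch α k) * (1 - 1 / c) ^ k) * hx

theorem meixner_recurrence (α : ℝ) (hα : ∀ k : ℕ, α ≠ -(k : ℝ)) (c : ℝ)
    (hc : c ≠ 0) (m x : ℕ) :
    (c - 1) * x * Meixner m x α c =
      c * ((m : ℝ) + α) * Meixner (m + 1) x α c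
        - ((m : ℝ) + ((m : ℝ) + α) * c) * Meixner m x α c
        + (m : ℝ) * Meixner (m - 1) x α c := by
  set b : ℕ → ℝ := fun k => bb α c x k with hbdef
  set S : ℝ := ∑ k ∈ Finset.range (m + 1), (m.choose k : ℝ) * b k with hSdef
  set A : ℝ := ∑ k ∈ Finset.range (m + 1), (m.choose k : ℝ) * b (k + 1) with hAdef
  set Q : ℝ := ∑ k ∈ Finset.range (m + 1), (k : ℝ) * (m.choose k : ℝ) * b k with hQdef
  set U : ℝ := ∑ k ∈ Finset.range (m + 1), (k : ℝ) * (m.choose k : ℝ) * b (k + 1) with hUdef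
  have hS0 : Meixner m x α c = S := by rw [meixner_eq, hSdef]
  -- Meixner (m+1) = A + S
  have hS1 : Meixner (m + 1) x α c = A + S := by
    rw [meixner_eq]
    rw [Finset.sum_range_succ' (fun k => ((m + 1).choose k : ℝ) * b k) (m + 1)]
    have e1 : ∀ k ∈ Finset.range (m + 1),
        (((m + 1).choose (k + 1) : ℝ)) * b (k + 1)
          = (m.choose k : ℝ) * b (k + 1) + (m.choose (k + 1) : ℝ) * b (k + 1) := by
      intro k _
      rw [Nat.choose_succ_succ]
      push_cast
      ring
    rw [Finset.sum_congr rfl e1, Finset.sum_add_distrib]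
    have e2 : (∑ k ∈ Finset.range (m + 1), (m.choose (k + 1) : ℝ) * b (k + 1))
        + ((m + 1).choose 0 : ℝ) * b 0 = S := by
      have := Finset.sum_range_succ' (fun k => (m.choose k : ℝ) * b k) (m + 1)
      rw [Finset.sum_range_succ (fun k => (m.choose k : ℝ) * b k) (m + 1)] at this
      simp only [Nat.choose_succ_self, Nat.cast_zero, Nat.choose_zero_right,
        Nat.cast_one, one_mul, zero_mul, add_zero] at this ⊢
      rw [hSdef]
      linarith [this]
    linarith [e2]
  -- LHS expansion
  have h2 : (c - 1) * x * S = c * α * A + c * U + (c - 1) * Q := by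
    rw [hSdef, hAdef, hUdef, hQdef, Finset.mul_sum, Finset.mul_sum, Finset.mul_sum,
      Finset.mul_sum, ← Finset.sum_add_distrib, ← Finset.sum_add_distrib]
    refine Finset.sum_congr rfl fun k _ => ?_
    have h := bb_rec α hα c hc x k
    simp only [hbdef]
    linear_combination (m.choose k : ℝ) * h
  -- U = m*A - Q
  have h3 : U = (m : ℝ) * A - Q := by
    have key : (m : ℝ) * A - U = Q := by
      rw [hAdef, hUdef, Finset.mul_sum, ← Finset.sum_sub_distrib]
      have e1 : ∀ k ∈ Finset.range (m + 1),
          (m : ℝ) * ((m.choose k : ℝ) * b (k + 1)) - (k : ℝ) * (m.choose k : ℝ) * b (k + 1)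
            = ((k : ℝ) + 1) * (m.choose (k + 1) : ℝ) * b (k + 1) := by
        intro k _
        have := choose_real m k
        linear_combination (-(b (k + 1))) * this
      rw [Finset.sum_congr rfl e1]
      have := Finset.sum_range_succ' (fun k => (k : ℝ) * (m.choose k : ℝ) * b k) (m + 1)
      rw [Finset.sum_range_succ (fun k => (k : ℝ) * (m.choose k : ℝ) * b k) (m + 1)] at this
      simp only [Nat.choose_succ_self, Nat.cast_zero, zero_mul, mul_zero, add_zero] at this
      rw [hQdef]
      push_cast at this ⊢
      linarith [this]
    linarith [key]
  -- m * Meixner (m-1) = m*S - Q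
  have h4 : (m : ℝ) * Meixner (m - 1) x α c = (m : ℝ) * S - Q := by
    rcases m with _ | n
    · simp [hQdef]
    · have hm : (n + 1) - 1 = n := rfl
      rw [hm, meixner_eq, Finset.mul_sum]
      rw [hSdef, hQdef, Finset.mul_sum, ← Finset.sum_sub_distrib]
      rw [Finset.sum_range_succ
        (fun k => ((n + 1 : ℕ) : ℝ) * (((n + 1 : ℕ).choose k : ℝ) * b k)
          - (k : ℝ) * ((n + 1 : ℕ).choose k : ℝ) * b k)]
      have last0 : ((n + 1 : ℕ) : ℝ) * (((n + 1 : ℕ).choose (n + 1) : ℝ) * b (n + 1))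
          - ((n + 1 : ℕ) : ℝ) * ((n + 1 : ℕ).choose (n + 1) : ℝ) * b (n + 1) = 0 := by ring
      rw [last0, add_zero]
      refine Finset.sum_congr rfl fun k hk => ?_
      have := choose_mul_real n k
      push_cast at this ⊢
      linear_combination (-(bb α c x k)) * this
  rw [hS0, hS1]
  linear_combination h2 + c * h3 - h4
end

section
/- For 0 < c < 1, α not a nonpositive integer, and complex w, z with |w|, |z| sufficiently small (e.g. |w|, |z| < ε where ε as in the paper satisfies (c+(1−c)ε/(1−ε))(1+(1−c)ε/(1−cε)) < 1), the identity (1−wz)^{−α} = (1−c)^{α} · Σ_{x≥0} ((α)_x/x!)·c^x · (Σ_{m≥0} ((α)_m/m!)·M_m(x; α, c)·z^m) · (1−cw)^{−α}·((1−w)/(1−cw))^x holds, with absolute convergence of the double series. -/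
open Complex

noncomputable def pochC (α : ℂ) (k : ℕ) : ℂ := ∏ i ∈ Finset.range k, (α + i)

noncomputable def MeixnerC (m x : ℕ) (α c : ℂ) : ℂ :=
  ∑ k ∈ Finset.range (m + 1),
    ((k.factorial : ℂ) / pochC α k) * (m.choose k) * (x.choose k) * (1 - 1 / c) ^ k

noncomputable def pochR (b : ℝ) (k : ℕ) : ℝ := ∏ i ∈ Finset.range k, (b + i)

lemma pochC_zero (β : ℂ) : pochC β 0 = 1 := by simp [pochC]

lemma pochC_succ (β : ℂ) (n : ℕ) : pochC β (n + 1) = pochC β n * (β + n) := by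
  simp [pochC, Finset.prod_range_succ]

lemma pochC_add (β : ℂ) (k j : ℕ) : pochC β (k + j) = pochC β k * pochC (β + k) j := by
  rw [pochC, Finset.prod_range_add, ← pochC]
  congr 1
  refine Finset.prod_congr rfl fun i _ => ?_
  push_cast; ring

lemma pochC_ne_zero {β : ℂ} (hβ : ∀ i : ℕ, β + (i : ℂ) ≠ 0) (k : ℕ) : pochC β k ≠ 0 :=
  Finset.prod_ne_zero_iff.mpr fun i _ => hβ i

lemma pochR_nonneg {b : ℝ} (hb : 0 ≤ b) (k : ℕ) : 0 ≤ pochR b k :=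
  Finset.prod_nonneg fun i _ => by positivity

lemma norm_pochC_le (β : ℂ) (k : ℕ) : ‖pochC β k‖ ≤ pochR ‖β‖ k := by
  rw [pochC, pochR]
  rw [norm_prod]
  refine Finset.prod_le_prod (fun i _ => norm_nonneg _) ?_
  intro i _
  calc ‖β + (i:ℂ)‖ ≤ ‖β‖ + ‖(i:ℂ)‖ := norm_add_le _ _
    _ = ‖β‖ + i := by simp

lemma pochR_mono {b b' : ℝ} (hb : 0 ≤ b) (h : b ≤ b') (k : ℕ) : pochR b k ≤ pochR b' k := by
  refine Finset.prod_le_prod (fun i _ => by positivity) (fun i _ => by linarith)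

lemma pochC_ofReal (b : ℝ) (k : ℕ) : pochC (b : ℂ) k = ((pochR b k : ℝ) : ℂ) := by
  rw [pochC, pochR]; push_cast; rfl

lemma key_iter (β : ℂ) : ∀ n : ℕ, ∀ v : ℂ, (1 - v) ∈ slitPlane →
    iteratedDeriv n (fun v : ℂ => (1 - v) ^ (-β)) v = pochC β n * (1 - v) ^ (-β - n) := by
  intro n
  induction n with
  | zero => intro v _; simp [pochC_zero]
  | succ n ih =>
    intro v hv
    have hopen : IsOpen {v : ℂ | (1 - v) ∈ slitPlane} :=
      isOpen_slitPlane.preimage (continuous_const.sub continuous_id)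
    have hev : iteratedDeriv n (fun v : ℂ => (1 - v) ^ (-β)) =ᶠ[nhds v]
        fun v => pochC β n * (1 - v) ^ (-β - n) :=
      Filter.eventually_of_mem (hopen.mem_nhds hv) (fun w hw => ih w hw)
    rw [iteratedDeriv_succ, hev.deriv_eq]
    have hd : HasDerivAt (fun v : ℂ => (1 - v) ^ (-β - n))
        ((-β - n) * (1 - v) ^ (-β - n - 1) * (-1)) v :=
      HasDerivAt.cpow_const ((hasDerivAt_id v).const_sub 1) hv
    rw [(hd.const_mul (pochC β n)).deriv]
    rw [pochC_succ]
    have : -β - ↑(n + 1) = -β - n - 1 := by push_cast; ring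
    rw [this]; ring

theorem hasSum_binomial (β : ℂ) {u : ℂ} (hu : ‖u‖ < 1) :
    HasSum (fun n => pochC β n / (n.factorial : ℂ) * u ^ n) ((1 - u) ^ (-β)) := by
  obtain ⟨r, hr1, hr2⟩ := exists_between hu
  have hr0 : 0 ≤ r := le_trans (norm_nonneg u) hr1.le
  set R : NNReal := ⟨r, hr0⟩ with hR
  have hslit : ∀ v : ℂ, ‖v‖ < 1 → (1 - v) ∈ slitPlane := by
    intro v hv
    refine Or.inl ?_
    have : v.re ≤ ‖v‖ := Complex.re_le_norm v
    simp only [Complex.sub_re, Complex.one_re]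
    linarith
  have hdiff : DifferentiableOn ℂ (fun v : ℂ => (1 - v) ^ (-β)) (Metric.closedBall 0 r) := by
    intro v hv
    have hv1 : ‖v‖ < 1 := lt_of_le_of_lt (by simpa using Metric.mem_closedBall.mp hv) hr2
    have : DifferentiableAt ℂ (fun x : ℂ => (1 - id x) ^ (-β)) v :=
      ((differentiableAt_const (1:ℂ)).sub differentiableAt_id).cpow
        (differentiableAt_const (-β)) (hslit v hv1)
    simpa [id] using this.differentiableWithinAt
  have hR0 : 0 < R := by
    rw [← NNReal.coe_pos]
    exact lt_of_le_of_lt (norm_nonneg u) hr1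
  have hball := hdiff.hasFPowerSeriesOnBall hR0
  have hy : u ∈ Metric.eball (0 : ℂ) R := by
    rw [Metric.mem_eball, edist_zero_right]
    exact_mod_cast (by rw [← NNReal.coe_lt_coe, coe_nnnorm]; exact hr1 : ‖u‖₊ < R)
  have H := hball.hasSum_iteratedFDeriv hy
  simp only [zero_add] at H
  convert H using 2 with n
  · rfl
  rw [iteratedFDeriv_apply_eq_iteratedDeriv_mul_prod]
  rw [key_iter β n 0 (by simpa using hslit 0 (by simp))]
  simp only [Finset.prod_const, Finset.card_univ, Fintype.card_fin, sub_zero, one_cpow,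
    smul_eq_mul]
  ring

theorem hasSum_binomial_real (b : ℝ) {r : ℝ} (h0 : 0 ≤ r) (h1 : r < 1) :
    HasSum (fun n => pochR b n / (n.factorial : ℝ) * r ^ n) ((1 - r) ^ (-b)) := by
  have H := hasSum_binomial (b : ℂ) (u := (r : ℂ))
    (by rwa [Complex.norm_real, Real.norm_eq_abs, _root_.abs_of_nonneg h0])
  have hcast : ∀ n : ℕ, pochC (b:ℂ) n / (n.factorial : ℂ) * (r:ℂ) ^ n
      = ((pochR b n / (n.factorial : ℝ) * r ^ n : ℝ) : ℂ) := by
    intro n; rw [pochC_ofReal]; push_cast; ring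
  have hval : ((1:ℂ) - (r:ℂ)) ^ (-(b:ℂ)) = (((1 - r) ^ (-b) : ℝ) : ℂ) := by
    rw [show ((1:ℂ) - (r:ℂ)) = (((1 - r : ℝ)) : ℂ) by push_cast; ring,
      show (-(b:ℂ)) = ((-b : ℝ) : ℂ) by push_cast; ring,
      Complex.ofReal_cpow (by linarith)]
  rw [hval] at H
  simp only [hcast] at H
  have H2 := Complex.reCLM.hasSum H
  simp only [Complex.reCLM_apply, Complex.ofReal_re] at H2
  exact H2

/-- step (a): expand the term as a finite sum over `k ∈ range (x+1)`. -/
lemma meixner_term_expand (α c : ℂ) (x m : ℕ) (z : ℂ) :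
    pochC α m / (m.factorial : ℂ) * MeixnerC m x α c * z ^ m =
    ∑ k ∈ Finset.range (x + 1),
      (x.choose k : ℂ) * (1 - 1/c) ^ k * ((k.factorial : ℂ) / pochC α k)
        * (pochC α m / (m.factorial : ℂ) * (m.choose k : ℂ) * z ^ m) := by
  set t : ℕ → ℂ := fun k =>
    (x.choose k : ℂ) * (1 - 1/c) ^ k * ((k.factorial : ℂ) / pochC α k)
      * (pochC α m / (m.factorial : ℂ) * (m.choose k : ℂ) * z ^ m) with ht
  have hL : pochC α m / (m.factorial : ℂ) * MeixnerC m x α c * z ^ m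
      = ∑ k ∈ Finset.range (m + 1), t k := by
    rw [MeixnerC, Finset.mul_sum, Finset.sum_mul]
    refine Finset.sum_congr rfl fun k _ => ?_
    rw [ht]; ring
  have h1 : ∑ k ∈ Finset.range (m + 1), t k = ∑ k ∈ Finset.range (m + x + 1), t k := by
    refine Finset.sum_subset (by intro i hi; simp at hi ⊢; omega) ?_
    intro k _ hk
    have : m < k := by simp at hk; omega
    simp [ht, Nat.choose_eq_zero_of_lt this]
  have h2 : ∑ k ∈ Finset.range (x + 1), t k = ∑ k ∈ Finset.range (m + x + 1), t k := by
    refine Finset.sum_subset (by intro i hi; simp at hi ⊢; omega) ?_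
    intro k _ hk
    have : x < k := by simp at hk; omega
    simp [ht, Nat.choose_eq_zero_of_lt this]
  rw [hL, h1, ← h2]

lemma choose_factorial_cast (j k : ℕ) :
    (((j + k).choose k : ℂ)) / ((j + k).factorial : ℂ)
      = 1 / ((k.factorial : ℂ) * (j.factorial : ℂ)) := by
  have h := Nat.add_choose_mul_factorial_mul_factorial j k
  have h2 : (((j + k).choose k : ℕ) : ℂ) * (j.factorial : ℂ) * (k.factorial : ℂ)
      = ((j + k).factorial : ℂ) := by exact_mod_cast h
  rw [div_eq_div_iff (Nat.cast_ne_zero.mpr (j + k).factorial_ne_zero)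
    (mul_ne_zero (Nat.cast_ne_zero.mpr k.factorial_ne_zero)
      (Nat.cast_ne_zero.mpr j.factorial_ne_zero))]
  linear_combination h2

/-- the inner shifted binomial series -/
lemma hasSum_choose_poch (α : ℂ) (k : ℕ) {z : ℂ} (hz : ‖z‖ < 1) :
    HasSum (fun m => pochC α m / (m.factorial : ℂ) * (m.choose k : ℂ) * z ^ m)
      (pochC α k / (k.factorial : ℂ) * z ^ k * (1 - z) ^ (-(α + (k:ℂ)))) := by
  have hinj : Function.Injective (fun j : ℕ => j + k) := add_left_injective k
  have hvan : ∀ m, m ∉ Set.range (fun j : ℕ => j + k) →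
      pochC α m / (m.factorial : ℂ) * (m.choose k : ℂ) * z ^ m = 0 := by
    intro m hm
    have : m < k := by
      by_contra h
      exact hm ⟨m - k, Nat.sub_add_cancel (not_lt.mp h)⟩
    simp [Nat.choose_eq_zero_of_lt this]
  rw [← hinj.hasSum_iff hvan]
  have H := (hasSum_binomial (α + k) hz).mul_left (pochC α k / (k.factorial : ℂ) * z ^ k)
  convert H using 2 with j
  · rfl
  simp only [Function.comp_apply]
  have hcf := choose_factorial_cast j k
  calc pochC α (j + k) / ((j + k).factorial : ℂ) * (((j + k).choose k : ℕ) : ℂ) * z ^ (j + k)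
      = pochC α (j + k) * ((((j + k).choose k : ℕ) : ℂ) / ((j + k).factorial : ℂ))
          * z ^ (j + k) := by ring
    _ = (pochC α k * pochC (α + k) j) * (1 / ((k.factorial : ℂ) * (j.factorial : ℂ)))
          * (z ^ k * z ^ j) := by
        rw [hcf, show j + k = k + j from add_comm j k, pochC_add, pow_add]
    _ = pochC α k / (k.factorial : ℂ) * z ^ k
          * (pochC (α + k) j / (j.factorial : ℂ) * z ^ j) := by ring

theorem hasSum_meixner (α c : ℂ) (hα : ∀ i : ℕ, α + (i : ℂ) ≠ 0) (hc : c ≠ 0) (x : ℕ)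
    {z : ℂ} (hz : ‖z‖ < 1) :
    HasSum (fun m => pochC α m / (m.factorial : ℂ) * MeixnerC m x α c * z ^ m)
      ((1 - z) ^ (-α) * ((1 - z / c) / (1 - z)) ^ x) := by
  have h1z : (1 : ℂ) - z ≠ 0 := by
    intro h
    rw [sub_eq_zero] at h
    rw [← h] at hz; simp at hz
  have hk : ∀ k ∈ Finset.range (x + 1),
      HasSum (fun m => (x.choose k : ℂ) * (1 - 1/c) ^ k * ((k.factorial : ℂ) / pochC α k)
          * (pochC α m / (m.factorial : ℂ) * (m.choose k : ℂ) * z ^ m))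
        (((1 - 1/c) * z * (1 - z)⁻¹) ^ k * (x.choose k : ℂ) * (1 - z) ^ (-α)) := by
    intro k _
    have H := (hasSum_choose_poch α k hz).mul_left
      ((x.choose k : ℂ) * (1 - 1/c) ^ k * ((k.factorial : ℂ) / pochC α k))
    have hp := pochC_ne_zero hα k
    have hf : (k.factorial : ℂ) ≠ 0 := Nat.cast_ne_zero.mpr k.factorial_ne_zero
    convert H using 1
    · rfl
    have hsplit : (1 - z) ^ (-(α + (k:ℂ))) = (1 - z) ^ (-α) * ((1 - z) ^ k)⁻¹ := by
      rw [neg_add, Complex.cpow_add _ _ h1z]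
      congr 1
      rw [← Complex.cpow_natCast (1 - z) k, ← Complex.cpow_neg]
    rw [hsplit, mul_pow, mul_pow, inv_pow]
    field_simp
  have H := hasSum_sum hk
  have hterm : (fun m => pochC α m / (m.factorial : ℂ) * MeixnerC m x α c * z ^ m)
      = fun m => ∑ k ∈ Finset.range (x + 1),
        (x.choose k : ℂ) * (1 - 1/c) ^ k * ((k.factorial : ℂ) / pochC α k)
          * (pochC α m / (m.factorial : ℂ) * (m.choose k : ℂ) * z ^ m) := by
    funext m; exact meixner_term_expand α c x m z
  rw [hterm]
  convert H using 1
  rw [← Finset.sum_mul, mul_comm]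
  congr 1
  have hbin := add_pow ((1 - 1/c) * z * (1 - z)⁻¹) 1 x
  simp only [one_pow, mul_one] at hbin
  rw [show (1 - z / c) / (1 - z) = (1 - 1/c) * z * (1 - z)⁻¹ + 1 by
    field_simp; ring]
  exact hbin

lemma cancel_helper (X E P Q K J Rk Rj : ℝ) (hP : P ≠ 0) (hK : K ≠ 0) (hJ : J ≠ 0) :
    X * E * (K / P) * (P * Q * (1 / (K * J)) * (Rk * Rj)) = X * E * Rk * (Q / J * Rj) := by
  field_simp

lemma choose_factorial_cast_real (j k : ℕ) :
    (((j + k).choose k : ℝ)) / ((j + k).factorial : ℝ)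
      = 1 / ((k.factorial : ℝ) * (j.factorial : ℝ)) := by
  have h2 : (((j + k).choose k : ℕ) : ℝ) * (j.factorial : ℝ) * (k.factorial : ℝ)
      = ((j + k).factorial : ℝ) := by exact_mod_cast Nat.add_choose_mul_factorial_mul_factorial j k
  rw [div_eq_div_iff (Nat.cast_ne_zero.mpr (j + k).factorial_ne_zero)
    (mul_ne_zero (Nat.cast_ne_zero.mpr k.factorial_ne_zero)
      (Nat.cast_ne_zero.mpr j.factorial_ne_zero))]
  linear_combination h2

theorem meixner_norm (α c : ℂ) (hα : ∀ i : ℕ, α + (i : ℂ) ≠ 0) (hc : c ≠ 0) (x : ℕ)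
    {z : ℂ} (hz : ‖z‖ < 1) :
    Summable (fun m => ‖pochC α m / (m.factorial : ℂ) * MeixnerC m x α c * z ^ m‖) ∧
    ∑' m, ‖pochC α m / (m.factorial : ℂ) * MeixnerC m x α c * z ^ m‖ ≤
      (1 - ‖z‖) ^ (-‖α‖) * (1 + ‖(1:ℂ) - 1/c‖ * ‖z‖ / (1 - ‖z‖)) ^ x := by
  set ρ : ℝ := ‖z‖ with hρ
  have hρ0 : 0 ≤ ρ := norm_nonneg z
  have h1ρ : 0 < 1 - ρ := by linarith
  set a : ℝ := ‖α‖ with ha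
  have ha0 : 0 ≤ a := norm_nonneg α
  set e : ℝ := ‖(1 : ℂ) - 1/c‖ with he
  have he0 : 0 ≤ e := norm_nonneg _
  set u : ℕ → ℕ → ℝ := fun k m =>
    ‖(x.choose k : ℂ) * (1 - 1/c) ^ k * ((k.factorial : ℂ) / pochC α k)
      * (pochC α m / (m.factorial : ℂ) * (m.choose k : ℂ) * z ^ m)‖ with hu
  have hle : ∀ m, ‖pochC α m / (m.factorial : ℂ) * MeixnerC m x α c * z ^ m‖
      ≤ ∑ k ∈ Finset.range (x + 1), u k m := by
    intro m
    rw [meixner_term_expand α c x m z]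
    exact norm_sum_le _ _
  have hkey : ∀ k : ℕ, Summable (u k) ∧
      ∑' m, u k m ≤ (x.choose k : ℝ) * e ^ k * ρ ^ k * (1 - ρ) ^ (-(a + k)) := by
    intro k
    have hinj : Function.Injective (fun j : ℕ => j + k) := add_left_injective k
    have hvan : ∀ m, m ∉ Set.range (fun j : ℕ => j + k) → u k m = 0 := by
      intro m hm
      have : m < k := by
        by_contra h
        exact hm ⟨m - k, Nat.sub_add_cancel (not_lt.mp h)⟩
      simp [hu, Nat.choose_eq_zero_of_lt this]
    set v : ℕ → ℝ := fun j =>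
      (x.choose k : ℝ) * e ^ k * ρ ^ k * (pochR (a + k) j / (j.factorial : ℝ) * ρ ^ j) with hv
    have hpk := pochC_ne_zero hα k
    have hnpk : 0 < ‖pochC α k‖ := norm_pos_iff.mpr hpk
    have hcomp : ∀ j, u k (j + k) ≤ v j := by
      intro j
      have hD : ‖pochC α (j + k) / (((j + k).factorial : ℕ) : ℂ) * (((j + k).choose k : ℕ) : ℂ)
          * z ^ (j + k)‖ = ‖pochC α k‖ * ‖pochC (α + k) j‖
            * ((((j + k).choose k : ℕ) : ℝ) / (((j + k).factorial : ℕ) : ℝ)) * (ρ ^ k * ρ ^ j) := by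
        rw [norm_mul, norm_mul, norm_div, norm_pow, Complex.norm_natCast, Complex.norm_natCast,
          show j + k = k + j from add_comm j k, pochC_add, norm_mul,
          show k + j = j + k from add_comm k j, pow_add]
        ring
      have hval : u k (j + k) = (x.choose k : ℝ) * e ^ k * ρ ^ k
          * (‖pochC (α + k) j‖ / (j.factorial : ℝ) * ρ ^ j) := by
        rw [hu]
        simp only []
        rw [norm_mul, norm_mul, norm_mul, hD, norm_pow, norm_div, Complex.norm_natCast,
          Complex.norm_natCast, choose_factorial_cast_real]
        have hkf : ((k.factorial : ℕ) : ℝ) ≠ 0 := Nat.cast_ne_zero.mpr k.factorial_ne_zero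
        have hjf : ((j.factorial : ℕ) : ℝ) ≠ 0 := Nat.cast_ne_zero.mpr j.factorial_ne_zero
        exact cancel_helper _ _ _ _ _ _ _ _ hnpk.ne' hkf hjf
      rw [hval]
      simp only [hv]
      have h1 : ‖pochC (α + k) j‖ ≤ pochR (a + k) j := by
        refine le_trans (norm_pochC_le _ _) (pochR_mono (norm_nonneg _) ?_ j)
        calc ‖α + (k : ℂ)‖ ≤ ‖α‖ + ‖(k : ℂ)‖ := norm_add_le _ _
          _ = a + k := by simp [ha]
      gcongr
    have hvsum : HasSum v ((x.choose k : ℝ) * e ^ k * ρ ^ k * ((1 - ρ) ^ (-(a + k)))) :=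
      (hasSum_binomial_real (a + k) hρ0 hz).mul_left _
    have hsummand : Summable (fun j => u k (j + k)) :=
      Summable.of_nonneg_of_le (fun j => norm_nonneg _) hcomp hvsum.summable
    have hSk : Summable (u k) := (hinj.summable_iff hvan).mp hsummand
    refine ⟨hSk, ?_⟩
    have hSum2 : HasSum (fun j => u k (j + k)) (∑' m, u k m) :=
      (hinj.hasSum_iff hvan).mpr hSk.hasSum
    exact hasSum_le hcomp hSum2 hvsum
  have hsum_each : ∀ k ∈ Finset.range (x + 1), Summable (u k) := fun k _ => (hkey k).1
  have hsum_u : Summable (fun m => ∑ k ∈ Finset.range (x + 1), u k m) := summable_sum hsum_each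
  have S1 : Summable (fun m => ‖pochC α m / (m.factorial : ℂ) * MeixnerC m x α c * z ^ m‖) :=
    Summable.of_nonneg_of_le (fun m => norm_nonneg _) hle hsum_u
  refine ⟨S1, ?_⟩
  calc ∑' m, ‖pochC α m / (m.factorial : ℂ) * MeixnerC m x α c * z ^ m‖
      ≤ ∑' m, ∑ k ∈ Finset.range (x + 1), u k m := Summable.tsum_le_tsum hle S1 hsum_u
    _ = ∑ k ∈ Finset.range (x + 1), ∑' m, u k m := Summable.tsum_finsetSum hsum_each
    _ ≤ ∑ k ∈ Finset.range (x + 1),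
          (x.choose k : ℝ) * e ^ k * ρ ^ k * (1 - ρ) ^ (-(a + k)) :=
        Finset.sum_le_sum fun k _ => (hkey k).2
    _ = ∑ k ∈ Finset.range (x + 1), (e * ρ / (1 - ρ)) ^ k * (x.choose k : ℝ) * (1 - ρ) ^ (-a) := by
        refine Finset.sum_congr rfl fun k _ => ?_
        rw [show (-(a + (k : ℝ))) = -a + -(k : ℝ) by ring, Real.rpow_add h1ρ,
          Real.rpow_neg h1ρ.le, Real.rpow_neg h1ρ.le, Real.rpow_natCast, div_pow, mul_pow]
        ring
    _ = (1 - ρ) ^ (-a) * (1 + e * ρ / (1 - ρ)) ^ x := by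
        rw [← Finset.sum_mul]
        have hbin := add_pow (e * ρ / (1 - ρ)) 1 x
        simp only [one_pow, mul_one] at hbin
        rw [show (1 : ℝ) + e * ρ / (1 - ρ) = e * ρ / (1 - ρ) + 1 from add_comm _ _, hbin, mul_comm]

lemma re_pos_one_sub {u : ℂ} (h : ‖u‖ < 1) : 0 < (1 - u).re := by
  have h2 : u.re ≤ ‖u‖ := Complex.re_le_norm u
  simp only [Complex.sub_re, Complex.one_re]
  linarith

lemma ne_zero_of_re_pos' {u : ℂ} (h : 0 < u.re) : u ≠ 0 := by
  intro h0; rw [h0] at h; simp at h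

lemma cpow_combine (A : ℂ) (p q r s t : ℂ) (hp : 0 < p.re) (hpim : p.im = 0)
    (hq : 0 < q.re) (hr : 0 < r.re) (hs : 0 < s.re) (ht : 0 < t.re)
    (hprod : p * q = r * s * t) :
    q ^ (-A) = p ^ A * (r ^ (-A) * s ^ (-A) * t ^ (-A)) := by
  have hp0 := ne_zero_of_re_pos' hp
  have hq0 := ne_zero_of_re_pos' hq
  have hr0 := ne_zero_of_re_pos' hr
  have hs0 := ne_zero_of_re_pos' hs
  have ht0 := ne_zero_of_re_pos' ht
  set L : ℂ := Complex.log p + Complex.log q - Complex.log r - Complex.log s - Complex.log t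
    with hL
  have hexp : Complex.exp L = 1 := by
    rw [hL, Complex.exp_sub, Complex.exp_sub, Complex.exp_sub, Complex.exp_add,
      Complex.exp_log hp0, Complex.exp_log hq0, Complex.exp_log hr0, Complex.exp_log hs0,
      Complex.exp_log ht0]
    field_simp
    linear_combination hprod
  obtain ⟨n, hn⟩ := Complex.exp_eq_one_iff.mp hexp
  have hargp : Complex.arg p = 0 := by
    rw [Complex.arg_eq_zero_iff]; exact ⟨hp.le, hpim⟩
  have hIm : L.im = Complex.arg p + Complex.arg q - Complex.arg r - Complex.arg s
      - Complex.arg t := by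
    simp [hL, Complex.log_im]
  have hq2 := Complex.abs_arg_lt_pi_div_two_iff.mpr (Or.inl hq)
  have hr2 := Complex.abs_arg_lt_pi_div_two_iff.mpr (Or.inl hr)
  have hs2 := Complex.abs_arg_lt_pi_div_two_iff.mpr (Or.inl hs)
  have ht2 := Complex.abs_arg_lt_pi_div_two_iff.mpr (Or.inl ht)
  rw [abs_lt] at hq2 hr2 hs2 ht2
  have hIm2 : ((n : ℝ)) * (2 * Real.pi) = L.im := by
    rw [hn]
    simp [Complex.mul_im, Complex.mul_re]
  have hpi := Real.pi_pos
  have hbound : -(2 * Real.pi) < L.im ∧ L.im < 2 * Real.pi := by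
    rw [hIm, hargp]
    constructor <;> linarith
  have hn0 : n = 0 := by
    have h1 : (-1 : ℝ) < (n : ℝ) := by nlinarith [hIm2, hbound.1]
    have h2 : (n : ℝ) < 1 := by nlinarith [hIm2, hbound.2]
    have h1' : (-1 : ℤ) < n := by exact_mod_cast h1
    have h2' : n < (1 : ℤ) := by exact_mod_cast h2
    omega
  have hL0 : L = 0 := by rw [hn, hn0]; simp
  have hlogq : Complex.log q = Complex.log r + Complex.log s + Complex.log t
      - Complex.log p := by
    have := hL
    rw [hL0] at this
    linear_combination -this
  rw [Complex.cpow_def_of_ne_zero hq0, Complex.cpow_def_of_ne_zero hp0,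
    Complex.cpow_def_of_ne_zero hr0, Complex.cpow_def_of_ne_zero hs0,
    Complex.cpow_def_of_ne_zero ht0, ← Complex.exp_add, ← Complex.exp_add, ← Complex.exp_add]
  congr 1
  rw [hlogq]
  ring

lemma frac_bound1 {c ε : ℝ} (hc0 : 0 < c) (hc1 : c < 1) {z : ℂ} (hε1 : ε < 1)
    (hz : ‖z‖ < ε) : ‖((c : ℂ) - z) / (1 - z)‖ ≤ c + (1 - c) * ε / (1 - ε) := by
  have hz1 : ‖z‖ < 1 := lt_trans hz hε1
  have h1z : (1 : ℂ) - z ≠ 0 := ne_zero_of_re_pos' (re_pos_one_sub hz1)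
  have hid : ((c : ℂ) - z) / (1 - z) = (c : ℂ) - ((1 - c : ℝ) : ℂ) * z / (1 - z) := by
    field_simp
    push_cast
    ring
  rw [hid]
  have hden : 1 - ε ≤ ‖(1 : ℂ) - z‖ := by
    calc (1 : ℝ) - ε ≤ 1 - ‖z‖ := by linarith
      _ = ‖(1 : ℂ)‖ - ‖z‖ := by simp
      _ ≤ ‖(1 : ℂ) - z‖ := norm_sub_norm_le _ _
  calc ‖(c : ℂ) - ((1 - c : ℝ) : ℂ) * z / (1 - z)‖
      ≤ ‖(c : ℂ)‖ + ‖((1 - c : ℝ) : ℂ) * z / (1 - z)‖ := norm_sub_le _ _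
    _ = c + (1 - c) * ‖z‖ / ‖(1 : ℂ) - z‖ := by
        rw [norm_div, norm_mul, Complex.norm_real, Complex.norm_real, Real.norm_eq_abs,
          Real.norm_eq_abs, _root_.abs_of_pos hc0, _root_.abs_of_nonneg (by linarith : (0:ℝ) ≤ 1 - c)]
    _ ≤ c + (1 - c) * ε / (1 - ε) := by
        have hε0 : 0 < 1 - ε := by
          have : 0 ≤ ‖z‖ := norm_nonneg z
          linarith
        have h1c : (0:ℝ) ≤ 1 - c := by linarith
        have hεpos : (0:ℝ) ≤ ε := le_trans (norm_nonneg z) hz.le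
        have hd : (1 - c) * ‖z‖ / ‖(1 : ℂ) - z‖ ≤ (1 - c) * ε / (1 - ε) :=
          div_le_div₀ (mul_nonneg h1c hεpos)
            (mul_le_mul_of_nonneg_left hz.le h1c) hε0 hden
        linarith

lemma frac_bound2 {c ε : ℝ} (hc0 : 0 < c) (hc1 : c < 1) {w : ℂ} (hε1 : ε < 1)
    (hw : ‖w‖ < ε) : ‖(1 - w) / (1 - (c : ℂ) * w)‖ ≤ 1 + (1 - c) * ε / (1 - c * ε) := by
  have hε0 : 0 < ε := lt_of_le_of_lt (norm_nonneg w) hw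
  have hcε : c * ε < 1 := by nlinarith
  have hcw : ‖(c : ℂ) * w‖ < c * ε := by
    rw [norm_mul, Complex.norm_real, Real.norm_eq_abs, _root_.abs_of_pos hc0]
    exact (mul_lt_mul_iff_right₀ hc0).mpr hw
  have hcw1 : ‖(c : ℂ) * w‖ < 1 := lt_trans hcw hcε
  have h1cw : (1 : ℂ) - (c : ℂ) * w ≠ 0 := ne_zero_of_re_pos' (re_pos_one_sub hcw1)
  have hid : (1 - w) / (1 - (c : ℂ) * w) = 1 - ((1 - c : ℝ) : ℂ) * w / (1 - (c : ℂ) * w) := by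
    rw [eq_sub_iff_add_eq, ← add_div, div_eq_one_iff_eq h1cw]
    push_cast
    ring
  rw [hid]
  have hden : 1 - c * ε ≤ ‖(1 : ℂ) - (c : ℂ) * w‖ := by
    calc (1 : ℝ) - c * ε ≤ 1 - ‖(c : ℂ) * w‖ := by linarith
      _ = ‖(1 : ℂ)‖ - ‖(c : ℂ) * w‖ := by simp
      _ ≤ ‖(1 : ℂ) - (c : ℂ) * w‖ := norm_sub_norm_le _ _
  calc ‖1 - ((1 - c : ℝ) : ℂ) * w / (1 - (c : ℂ) * w)‖
      ≤ ‖(1 : ℂ)‖ + ‖((1 - c : ℝ) : ℂ) * w / (1 - (c : ℂ) * w)‖ := norm_sub_le _ _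
    _ = 1 + (1 - c) * ‖w‖ / ‖(1 : ℂ) - (c : ℂ) * w‖ := by
        rw [norm_div, norm_mul, Complex.norm_real, Real.norm_eq_abs,
          _root_.abs_of_nonneg (by linarith : (0:ℝ) ≤ 1 - c)]
        simp
    _ ≤ 1 + (1 - c) * ε / (1 - c * ε) := by
        have hpos : (0:ℝ) < 1 - c * ε := by linarith
        have h1c : (0:ℝ) ≤ 1 - c := by linarith
        have hd : (1 - c) * ‖w‖ / ‖(1 : ℂ) - (c : ℂ) * w‖ ≤ (1 - c) * ε / (1 - c * ε) :=
          div_le_div₀ (mul_nonneg h1c hε0.le)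
            (mul_le_mul_of_nonneg_left hw.le h1c) hpos hden
        linarith

theorem meixner_master_generating_function_two (α : ℝ) (hα : ∀ k : ℕ, α ≠ -(k : ℝ))
    (c : ℝ) (hc0 : 0 < c) (hc1 : c < 1) (ε : ℝ) (hε0 : 0 < ε) (hε1 : ε < 1)
    (hεc : (c + (1 - c) * ε / (1 - ε)) * (1 + (1 - c) * ε / (1 - c * ε)) < 1)
    (w z : ℂ) (hw : ‖w‖ < ε) (hz : ‖z‖ < ε) :
    (1 - w * z) ^ (-(α : ℂ)) =
      ((1 - c : ℂ)) ^ (α : ℂ) *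
        ∑' x : ℕ, (pochC (α : ℂ) x / (x.factorial : ℂ)) * (c : ℂ) ^ x *
          (∑' m : ℕ, (pochC (α : ℂ) m / (m.factorial : ℂ)) * MeixnerC m x (α : ℂ) (c : ℂ) * z ^ m) *
          ((1 - (c : ℂ) * w) ^ (-(α : ℂ)) * (((1 - w) / (1 - (c : ℂ) * w)) ^ x)) ∧
    Summable (fun q : ℕ × ℕ =>
      ‖(pochC (α : ℂ) q.1 / (q.1.factorial : ℂ)) * (c : ℂ) ^ q.1 *
        ((pochC (α : ℂ) q.2 / (q.2.factorial : ℂ)) * MeixnerC q.2 q.1 (α : ℂ) (c : ℂ) * z ^ q.2) *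
        ((1 - (c : ℂ) * w) ^ (-(α : ℂ)) * (((1 - w) / (1 - (c : ℂ) * w)) ^ q.1))‖) := by
  set A : ℂ := (α : ℂ) with hA
  have hαC : ∀ i : ℕ, A + (i : ℂ) ≠ 0 := by
    intro i h
    apply hα i
    have h2 : (α : ℂ) = ((-(i:ℝ) : ℝ) : ℂ) := by push_cast; linear_combination h
    exact_mod_cast h2
  have hcC : (c : ℂ) ≠ 0 := by exact_mod_cast hc0.ne'
  have hz1 : ‖z‖ < 1 := lt_trans hz hε1
  have hw1 : ‖w‖ < 1 := lt_trans hw hε1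
  set P : ℝ := c + (1 - c) * ε / (1 - ε) with hP
  set Q : ℝ := 1 + (1 - c) * ε / (1 - c * ε) with hQ
  have hB1 := frac_bound1 hc0 hc1 hε1 hz
  have hB2 := frac_bound2 hc0 hc1 hε1 hw
  have hP0 : 0 ≤ P := le_trans (norm_nonneg _) hB1
  have hQ0 : 0 ≤ Q := le_trans (norm_nonneg _) hB2
  set T : ℂ := ((c : ℂ) - z) / (1 - z) * ((1 - w) / (1 - (c : ℂ) * w)) with hT
  have hTle : ‖T‖ ≤ P * Q := by
    rw [hT, norm_mul]
    exact mul_le_mul hB1 hB2 (norm_nonneg _) hP0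
  have hT1 : ‖T‖ < 1 := lt_of_le_of_lt hTle hεc
  have h1z : (1:ℂ) - z ≠ 0 := ne_zero_of_re_pos' (re_pos_one_sub hz1)
  have hcw1 : ‖(c:ℂ) * w‖ < 1 := by
    rw [norm_mul, Complex.norm_real, Real.norm_eq_abs, _root_.abs_of_pos hc0]
    nlinarith [norm_nonneg w]
  have h1cw : (1:ℂ) - (c:ℂ) * w ≠ 0 := ne_zero_of_re_pos' (re_pos_one_sub hcw1)
  have hwz1 : ‖w * z‖ < 1 := by
    rw [norm_mul]
    nlinarith [norm_nonneg w, norm_nonneg z]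
  constructor
  · -- the identity
    have hinner : ∀ x : ℕ,
        (∑' m : ℕ, (pochC A m / (m.factorial : ℂ)) * MeixnerC m x A (c:ℂ) * z ^ m)
          = (1 - z) ^ (-A) * ((1 - z / (c:ℂ)) / (1 - z)) ^ x :=
      fun x => (hasSum_meixner A (c:ℂ) hαC hcC x hz1).tsum_eq
    have houter : HasSum (fun x : ℕ => (pochC A x / (x.factorial : ℂ)) * (c:ℂ) ^ x *
          ((1 - z) ^ (-A) * ((1 - z / (c:ℂ)) / (1 - z)) ^ x) *
          ((1 - (c:ℂ) * w) ^ (-A) * (((1 - w) / (1 - (c:ℂ) * w)) ^ x)))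
        ((1 - z) ^ (-A) * (1 - (c:ℂ) * w) ^ (-A) * (1 - T) ^ (-A)) := by
      have H := (hasSum_binomial A hT1).mul_left ((1 - z) ^ (-A) * (1 - (c:ℂ) * w) ^ (-A))
      convert H using 2 with x
      · rfl
      have hcz : (c:ℂ) * ((1 - z/(c:ℂ))/(1 - z)) = ((c:ℂ) - z)/(1 - z) := by
        field_simp
      rw [hT, mul_pow, ← hcz, mul_pow]
      ring
    have hfun : (fun x : ℕ => (pochC A x / (x.factorial : ℂ)) * (c : ℂ) ^ x *
          (∑' m : ℕ, (pochC A m / (m.factorial : ℂ)) * MeixnerC m x A (c : ℂ) * z ^ m) *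
          ((1 - (c : ℂ) * w) ^ (-A) * (((1 - w) / (1 - (c : ℂ) * w)) ^ x)))
        = fun x : ℕ => (pochC A x / (x.factorial : ℂ)) * (c:ℂ) ^ x *
          ((1 - z) ^ (-A) * ((1 - z / (c:ℂ)) / (1 - z)) ^ x) *
          ((1 - (c:ℂ) * w) ^ (-A) * (((1 - w) / (1 - (c:ℂ) * w)) ^ x)) := by
      funext x
      rw [hinner x]
    rw [hfun, houter.tsum_eq]
    refine cpow_combine A ((1 - c : ℂ)) (1 - w * z) (1 - z) (1 - (c:ℂ) * w) (1 - T)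
      ?_ ?_ (re_pos_one_sub hwz1) (re_pos_one_sub hz1) (re_pos_one_sub hcw1)
      (re_pos_one_sub hT1) ?_
    · simp only [Complex.sub_re, Complex.one_re, Complex.ofReal_re]
      linarith
    · simp
    · rw [hT]
      field_simp
      ring
  · -- summability
    refine (summable_prod_of_nonneg (fun q => norm_nonneg _)).mpr ⟨?_, ?_⟩
    · intro x
      have hfac : (fun m : ℕ => ‖(pochC A x / (x.factorial : ℂ)) * (c : ℂ) ^ x *
            ((pochC A m / (m.factorial : ℂ)) * MeixnerC m x A (c : ℂ) * z ^ m) *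
            ((1 - (c : ℂ) * w) ^ (-A) * (((1 - w) / (1 - (c : ℂ) * w)) ^ x))‖)
          = fun m : ℕ => (‖pochC A x / (x.factorial : ℂ)‖ * ‖(c : ℂ) ^ x‖ *
            ‖(1 - (c : ℂ) * w) ^ (-A) * (((1 - w) / (1 - (c : ℂ) * w)) ^ x)‖) *
            ‖pochC A m / (m.factorial : ℂ) * MeixnerC m x A (c : ℂ) * z ^ m‖ := by
        funext m
        simp only [norm_mul]
        ring
      exact hfac ▸ ((meixner_norm A (c:ℂ) hαC hcC x hz1).1.mul_left _)
    · -- the row sums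
      set ρ : ℝ := ‖z‖ with hρ
      have hρ0 : 0 ≤ ρ := norm_nonneg z
      have h1ρ : 0 < 1 - ρ := by linarith
      set aR : ℝ := ‖A‖ with haR
      have haR0 : 0 ≤ aR := norm_nonneg A
      set e : ℝ := ‖(1 : ℂ) - 1/(c:ℂ)‖ with he
      have he0 : 0 ≤ e := norm_nonneg _
      set K : ℝ := ‖(1 - (c:ℂ) * w) ^ (-A)‖ with hK
      have hK0 : 0 ≤ K := norm_nonneg _
      set W : ℝ := ‖(1 - w) / (1 - (c:ℂ) * w)‖ with hW
      have hW0 : 0 ≤ W := norm_nonneg _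
      set S : ℝ := 1 + e * ρ / (1 - ρ) with hS
      have hS0 : 0 ≤ S := by
        have h' : 0 ≤ e * ρ / (1 - ρ) := by positivity
        rw [hS]
        linarith
      have hce : c * e = 1 - c := by
        have h1 : ((c:ℂ)) * ((1:ℂ) - 1/(c:ℂ)) = ((c - 1 : ℝ) : ℂ) := by
          field_simp
          push_cast
          ring
        have h2 : c * e = ‖((c:ℂ)) * ((1:ℂ) - 1/(c:ℂ))‖ := by
          rw [norm_mul, Complex.norm_real, Real.norm_eq_abs, _root_.abs_of_pos hc0]
        rw [h2, h1, Complex.norm_real, Real.norm_eq_abs, abs_sub_comm,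
          _root_.abs_of_pos (by linarith : (0:ℝ) < 1 - c)]
      have hcS : c * S ≤ P := by
        have hmono : (1 - c) * ρ / (1 - ρ) ≤ (1 - c) * ε / (1 - ε) := by
          have h1ε : 0 < 1 - ε := by linarith
          refine div_le_div₀ (mul_nonneg (by linarith) (by linarith))
            (mul_le_mul_of_nonneg_left hz.le (by linarith)) h1ε (by linarith)
        calc c * S = c + (c * e) * ρ / (1 - ρ) := by rw [hS]; ring
          _ = c + (1 - c) * ρ / (1 - ρ) := by rw [hce]
          _ ≤ P := by rw [hP]; linarith
      set u0 : ℝ := c * S * W with hu0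
      have hu00 : 0 ≤ u0 := by positivity
      have hu01 : u0 < 1 := by
        have : u0 ≤ P * Q := mul_le_mul hcS hB2 hW0 hP0
        exact lt_of_le_of_lt this hεc
      set g : ℕ → ℝ := fun x => (K * (1 - ρ) ^ (-aR)) *
        (pochR aR x / (x.factorial : ℝ) * u0 ^ x) with hg
      have hgsum : Summable g :=
        ((hasSum_binomial_real aR hu00 hu01).summable).mul_left _
      refine Summable.of_nonneg_of_le (fun x => tsum_nonneg (fun m => norm_nonneg _)) ?_ hgsum
      intro x
      have hfac : (fun m : ℕ => ‖(pochC A x / (x.factorial : ℂ)) * (c : ℂ) ^ x *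
            ((pochC A m / (m.factorial : ℂ)) * MeixnerC m x A (c : ℂ) * z ^ m) *
            ((1 - (c : ℂ) * w) ^ (-A) * (((1 - w) / (1 - (c : ℂ) * w)) ^ x))‖)
          = fun m : ℕ => (‖pochC A x / (x.factorial : ℂ)‖ * ‖(c : ℂ) ^ x‖ *
            ‖(1 - (c : ℂ) * w) ^ (-A) * (((1 - w) / (1 - (c : ℂ) * w)) ^ x)‖) *
            ‖pochC A m / (m.factorial : ℂ) * MeixnerC m x A (c : ℂ) * z ^ m‖ := by
        funext m
        simp only [norm_mul]
        ring
      calc (∑' m : ℕ, ‖(pochC A x / (x.factorial : ℂ)) * (c : ℂ) ^ x *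
            ((pochC A m / (m.factorial : ℂ)) * MeixnerC m x A (c : ℂ) * z ^ m) *
            ((1 - (c : ℂ) * w) ^ (-A) * (((1 - w) / (1 - (c : ℂ) * w)) ^ x))‖)
          = (‖pochC A x / (x.factorial : ℂ)‖ * ‖(c : ℂ) ^ x‖ *
              ‖(1 - (c : ℂ) * w) ^ (-A) * (((1 - w) / (1 - (c : ℂ) * w)) ^ x)‖) *
            ∑' m : ℕ, ‖pochC A m / (m.factorial : ℂ) * MeixnerC m x A (c : ℂ) * z ^ m‖ := by
            rw [hfac, tsum_mul_left]
        _ ≤ (pochR aR x / (x.factorial : ℝ) * c ^ x * (K * W ^ x)) *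
              ((1 - ρ) ^ (-aR) * S ^ x) := by
            have hconst : ‖pochC A x / (x.factorial : ℂ)‖ * ‖(c : ℂ) ^ x‖ *
                ‖(1 - (c : ℂ) * w) ^ (-A) * (((1 - w) / (1 - (c : ℂ) * w)) ^ x)‖
                ≤ pochR aR x / (x.factorial : ℝ) * c ^ x * (K * W ^ x) := by
              rw [norm_div, norm_pow, norm_mul, norm_pow, Complex.norm_natCast,
                Complex.norm_real, Real.norm_eq_abs, _root_.abs_of_pos hc0]
              have h1 : ‖pochC A x‖ ≤ pochR aR x := norm_pochC_le A x
              gcongr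
            have htsum := (meixner_norm A (c:ℂ) hαC hcC x hz1).2
            refine mul_le_mul hconst ?_ (tsum_nonneg (fun m => norm_nonneg _)) ?_
            · exact htsum
            · exact mul_nonneg (mul_nonneg (div_nonneg (pochR_nonneg haR0 x)
                (Nat.cast_nonneg _)) (pow_nonneg hc0.le x))
                (mul_nonneg hK0 (pow_nonneg hW0 x))
        _ ≤ g x := by
            simp only [hg]
            have hexp : (u0 : ℝ) ^ x = c ^ x * S ^ x * W ^ x := by
              rw [hu0, mul_pow, mul_pow]
            rw [hexp]
            ring_nf
            apply le_of_eq
            ring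
end
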